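/- For every n ≥ 1, det(1/(j−2i+n+1)!)_{1≤i,j≤n} = 1 / Π_{k=1}^{n} (2k−1)!!, where 1/l! is interpreted as 0 when l < 0. -/

import Mathlib

open Finset

lemma aux_entry (n i j : ℕ) (hi : i < n) (hj : j < n) :
    ((2 * n - 1 - 2 * i).factorial : ℚ) *
      (if h : (0 : ℤ) ≤ ((j : ℕ) + 1 : ℤ) - 2 * ((i : ℕ) + 1) + n + 1
        then (((((j : ℕ) + 1 : ℤ) - 2 * ((i : ℕ) + 1) + n + 1).toNat).factorial : ℚ)⁻¹
        else 0) =
    ((2 * n - 1 - 2 * i).descFactorial (n - (j + 1)) : ℚ) := by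
  by_cases h : (0 : ℤ) ≤ ((j : ℕ) + 1 : ℤ) - 2 * ((i : ℕ) + 1) + n + 1
  · rw [dif_pos h]
    have hk : n - (j + 1) ≤ 2 * n - 1 - 2 * i := by omega
    have hm : ((j : ℕ) + 1 : ℤ) - 2 * ((i : ℕ) + 1) + n + 1 = ((j + n - 2 * i : ℕ) : ℤ) := by
      push_cast; omega
    rw [hm, Int.toNat_natCast]
    have key := Nat.factorial_mul_descFactorial hk
    have hsub : 2 * n - 1 - 2 * i - (n - (j + 1)) = j + n - 2 * i := by omega
    rw [hsub] at key
    have hne : ((j + n - 2 * i).factorial : ℚ) ≠ 0 :=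
      Nat.cast_ne_zero.mpr (Nat.factorial_ne_zero _)
    rw [← div_eq_mul_inv, div_eq_iff hne]
    exact_mod_cast (key.symm.trans (mul_comm _ _))
  · rw [dif_neg h, mul_zero]
    symm
    rw [Nat.cast_eq_zero, Nat.descFactorial_eq_zero_iff_lt]
    omega

lemma aux_prodIoc (a d : ℕ) :
    ∏ m ∈ Finset.Ioc a (a + d), ((2 * (m - a) : ℕ) : ℚ) = 2 ^ d * (d.factorial : ℚ) := by
  induction d with
  | zero => simp
  | succ d ih =>
    rw [show a + (d + 1) = (a + d) + 1 from rfl,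
      Finset.prod_Ioc_succ_top (by omega) _, ih,
      show a + d + 1 - a = d + 1 from by omega, Nat.factorial_succ]
    push_cast
    ring

lemma aux_vdm (n : ℕ) (u : Fin n → ℚ) (hu : ∀ i : Fin n, u i = 2 * (i : ℕ) + 1) :
    (Matrix.vandermonde u).det = ∏ k ∈ Finset.range n, (2 ^ k * (k.factorial : ℚ)) := by
  rw [Matrix.det_vandermonde]
  have inner : ∀ i : Fin n, ∏ j ∈ Finset.Ioi i, (u j - u i)
      = 2 ^ (n - 1 - (i : ℕ)) * (((n - 1 - (i : ℕ)).factorial : ℚ)) := by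
    intro i
    have hi := i.isLt
    have h1 : ∏ j ∈ Finset.Ioi i, (u j - u i)
        = ∏ j ∈ Finset.Ioi i, ((2 * ((j : ℕ) - (i : ℕ)) : ℕ) : ℚ) := by
      refine Finset.prod_congr rfl fun j hj => ?_
      have hij : (i : ℕ) < (j : ℕ) := Fin.lt_def.mp (Finset.mem_Ioi.mp hj)
      rw [hu j, hu i]
      push_cast [Nat.cast_sub hij.le]
      ring
    have h2 : ∏ m ∈ Finset.Ioc (i : ℕ) (n - 1), ((2 * (m - (i : ℕ)) : ℕ) : ℚ)
        = ∏ j ∈ Finset.Ioi i, ((2 * ((j : ℕ) - (i : ℕ)) : ℕ) : ℚ) := by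
      rw [show Finset.Ioc (i : ℕ) (n - 1) = Finset.Ioo (i : ℕ) n from by
        ext m; simp only [Finset.mem_Ioc, Finset.mem_Ioo]; omega,
        ← Fin.map_valEmbedding_Ioi, Finset.prod_map]
      rfl
    have h3 := aux_prodIoc (i : ℕ) (n - 1 - (i : ℕ))
    rw [show (i : ℕ) + (n - 1 - (i : ℕ)) = n - 1 from by omega] at h3
    rw [h1, ← h2, h3]
  rw [Finset.prod_congr rfl (fun i _ => inner i),
    Fin.prod_univ_eq_prod_range (fun k => 2 ^ (n - 1 - k) * (((n - 1 - k).factorial : ℚ))) n]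
  exact Finset.prod_range_reflect (fun k => 2 ^ k * ((k.factorial : ℚ))) n

/-- `det(1/(j-2i+n+1)!)_{1 ≤ i,j ≤ n} = 1 / ∏_{k=1}^{n} (2k-1)!!`, where `1/l! = 0` for `l < 0`. -/
theorem det_inverse_factorials (n : ℕ) (hn : 1 ≤ n)
    (M : Matrix (Fin n) (Fin n) ℚ)
    (hM : ∀ i j : Fin n,
      M i j = if h : (0 : ℤ) ≤ ((j : ℕ) + 1 : ℤ) - 2 * ((i : ℕ) + 1) + n + 1
        then ((((((j : ℕ) + 1 : ℤ) - 2 * ((i : ℕ) + 1) + n + 1).toNat).factorial : ℚ))⁻¹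
        else 0) :
    M.det = ((∏ k ∈ Finset.range n, (Nat.doubleFactorial (2 * k + 1) : ℚ)))⁻¹ := by
  set B' : Matrix (Fin n) (Fin n) ℚ :=
    Matrix.of fun i j : Fin n => (descPochhammer ℚ (j : ℕ)).eval
      (((2 * n - 1 - 2 * (i : ℕ) : ℕ) : ℚ)) with hB'
  have hscale : Matrix.det (Matrix.of fun i j : Fin n =>
        (((2 * n - 1 - 2 * (i : ℕ)).factorial : ℚ)) * M i j)
      = (∏ i : Fin n, (((2 * n - 1 - 2 * (i : ℕ)).factorial : ℚ))) * M.det :=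
    Matrix.det_mul_column _ M
  have hBeq : (Matrix.of fun i j : Fin n =>
        (((2 * n - 1 - 2 * (i : ℕ)).factorial : ℚ)) * M i j)
      = B'.submatrix id Fin.revPerm := by
    ext i j
    simp only [Matrix.of_apply, Matrix.submatrix_apply, id, hB', Fin.revPerm_apply]
    rw [hM i j, Fin.val_rev, descPochhammer_eval_eq_descFactorial]
    exact aux_entry n i j i.isLt j.isLt
  have hpoly : (Matrix.vandermonde
        (fun i : Fin n => ((2 * n - 1 - 2 * (i : ℕ) : ℕ) : ℚ))).det = B'.det :=
    Matrix.det_eval_matrixOfPolynomials_eq_det_vandermonde _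
      (fun j => descPochhammer ℚ (j : ℕ))
      (fun j => descPochhammer_natDegree ℚ (j : ℕ))
      (fun j => monic_descPochhammer ℚ (j : ℕ))
  have hvu : Matrix.vandermonde (fun i : Fin n => (2 * (i : ℕ) + 1 : ℚ))
      = (Matrix.vandermonde
          (fun i : Fin n => ((2 * n - 1 - 2 * (i : ℕ) : ℕ) : ℚ))).submatrix Fin.revPerm id := by
    ext i j
    simp only [Matrix.vandermonde_apply, Matrix.submatrix_apply, id, Fin.revPerm_apply]
    congr 1
    have hi := i.isLt
    rw [Fin.val_rev, show (2 * n - 1 - 2 * (n - ((i : ℕ) + 1)) : ℕ) = 2 * (i : ℕ) + 1 from by omega]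
    push_cast
    ring
  have key : (∏ i : Fin n, (((2 * n - 1 - 2 * (i : ℕ)).factorial : ℚ))) * M.det
      = (Matrix.vandermonde (fun i : Fin n => (2 * (i : ℕ) + 1 : ℚ))).det := by
    rw [← hscale, hBeq, Matrix.det_permute', hvu, Matrix.det_permute, hpoly]
  have hvdm : (Matrix.vandermonde (fun i : Fin n => (2 * (i : ℕ) + 1 : ℚ))).det
      = ∏ k ∈ Finset.range n, (2 ^ k * (k.factorial : ℚ)) :=
    aux_vdm n _ (fun i => rfl)
  have hfac : (∏ i : Fin n, (((2 * n - 1 - 2 * (i : ℕ)).factorial : ℚ)))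
      = ∏ k ∈ Finset.range n, (((2 * k + 1).factorial : ℚ)) := by
    rw [Fin.prod_univ_eq_prod_range (fun k => (((2 * n - 1 - 2 * k).factorial : ℚ))) n,
      ← Finset.prod_range_reflect (fun k => (((2 * k + 1).factorial : ℚ))) n]
    refine Finset.prod_congr rfl fun k hk => ?_
    have hk' := Finset.mem_range.mp hk
    congr 2
    omega
  have hD : (∏ k ∈ Finset.range n, (Nat.doubleFactorial (2 * k + 1) : ℚ))
        * (∏ k ∈ Finset.range n, (2 ^ k * (k.factorial : ℚ)))
      = ∏ k ∈ Finset.range n, (((2 * k + 1).factorial : ℚ)) := by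
    rw [← Finset.prod_mul_distrib]
    refine Finset.prod_congr rfl fun k _ => ?_
    have h1 : (2 * k + 1).factorial
        = Nat.doubleFactorial (2 * k + 1) * Nat.doubleFactorial (2 * k) :=
      Nat.factorial_eq_mul_doubleFactorial (2 * k)
    rw [Nat.doubleFactorial_two_mul] at h1
    rw [h1]
    push_cast
    ring
  have hPne : (∏ k ∈ Finset.range n, (2 ^ k * (k.factorial : ℚ))) ≠ 0 := by
    refine Finset.prod_ne_zero_iff.mpr fun k _ => ?_
    positivity
  have hDne : (∏ k ∈ Finset.range n, (Nat.doubleFactorial (2 * k + 1) : ℚ)) ≠ 0 := by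
    refine Finset.prod_ne_zero_iff.mpr fun k _ => ?_
    exact_mod_cast (Nat.doubleFactorial_pos _).ne'
  rw [hfac, hvdm, ← hD] at key
  have hone : (∏ k ∈ Finset.range n, (Nat.doubleFactorial (2 * k + 1) : ℚ)) * M.det = 1 := by
    have key2 : (∏ k ∈ Finset.range n, (2 ^ k * (k.factorial : ℚ)))
        * ((∏ k ∈ Finset.range n, (Nat.doubleFactorial (2 * k + 1) : ℚ)) * M.det)
        = (∏ k ∈ Finset.range n, (2 ^ k * (k.factorial : ℚ))) * 1 := by
      rw [mul_one]; linear_combination key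
    exact mul_left_cancel₀ hPne key2
  calc M.det = ((∏ k ∈ Finset.range n, (Nat.doubleFactorial (2 * k + 1) : ℚ)))⁻¹
        * ((∏ k ∈ Finset.range n, (Nat.doubleFactorial (2 * k + 1) : ℚ)) * M.det) := by
        rw [← mul_assoc, inv_mul_cancel₀ hDne, one_mul]
    _ = ((∏ k ∈ Finset.range n, (Nat.doubleFactorial (2 * k + 1) : ℚ)))⁻¹ := by
        rw [hone, mul_one]
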